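/- For every natural number L ≥ 1, the congestion-weighted transmitted data fraction of the bandwidth-optimal Swing algorithm on a ring satisfies the exact identity (in ℝ): ∑_{k=0}^{L−1} (2^(k+1) − (−1)^(k+1)) / (3 · 2^(k+1)) = L/3 + (1/9) · (1 − (−1/2)^L). In particular this quantity equals log₂ n / 3 up to a bounded additive error of at most 1/6, establishing the transmission-delay-optimality factor Θ = (1/3) log₂ n of bandwidth-optimal Swing on a ring of n = 2^L nodes. -/

import Mathlib

lemma swing_sum_id (L : ℕ) :
    ∑ k ∈ Finset.range L, ((2 : ℝ) ^ (k + 1) - (-1 : ℝ) ^ (k + 1)) / (3 * 2 ^ (k + 1))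
        = L / 3 + (1 / 9) * (1 - (-1 / 2 : ℝ) ^ L) := by
  induction L with
  | zero => simp
  | succ n ih =>
    rw [Finset.sum_range_succ, ih]
    have h2 : (2 : ℝ) ^ (n + 1) ≠ 0 := by positivity
    push_cast
    rw [div_pow, pow_succ]
    field_simp
    ring_nf
    rw [← mul_pow]
    norm_num

/-- **Transmission-delay optimality of bandwidth-optimal Swing on a ring.**
On a ring of `n = 2^L` nodes, in step `k` the per-link congestion is
`(2^(k+1) - (-1)^(k+1))/3` while the transmitted data fraction is `1/2^(k+1)`.
The congestion-weighted transmitted data fraction satisfies the exact identity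
`∑_{k=0}^{L-1} (2^(k+1) - (-1)^(k+1)) / (3 · 2^(k+1)) = L/3 + (1/9)(1 - (-1/2)^L)`,
which equals `log₂ n / 3 = L/3` up to an additive error of at most `1/6`,
establishing the factor `Θ = (1/3) log₂ n`. -/
theorem swing_bw_tx_delay_ring (L : ℕ) (hL : 1 ≤ L) :
    ∑ k ∈ Finset.range L, ((2 : ℝ) ^ (k + 1) - (-1 : ℝ) ^ (k + 1)) / (3 * 2 ^ (k + 1))
        = L / 3 + (1 / 9) * (1 - (-1 / 2 : ℝ) ^ L) ∧
    |(∑ k ∈ Finset.range L,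
        ((2 : ℝ) ^ (k + 1) - (-1 : ℝ) ^ (k + 1)) / (3 * 2 ^ (k + 1))) - L / 3| ≤ 1 / 6 := by
  refine ⟨swing_sum_id L, ?_⟩
  rw [swing_sum_id L]
  have h : |(-1 / 2 : ℝ) ^ L| ≤ 1 / 2 := by
    rw [abs_pow]
    have : |(-1 / 2 : ℝ)| = 1 / 2 := by norm_num [abs_of_nonpos]
    rw [this]
    calc ((1:ℝ)/2) ^ L ≤ (1/2) ^ 1 := by
          apply pow_le_pow_of_le_one (by norm_num) (by norm_num) hL
      _ = 1/2 := pow_one _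
  have := abs_sub_abs_le_abs_sub (1 : ℝ) ((-1/2 : ℝ) ^ L)
  have habs : |(1 : ℝ) - (-1 / 2 : ℝ) ^ L| ≤ 3 / 2 := by
    calc |(1 : ℝ) - (-1 / 2 : ℝ) ^ L| ≤ |(1:ℝ)| + |(-1 / 2 : ℝ) ^ L| := abs_sub _ _
      _ ≤ 1 + 1/2 := by rw [abs_of_pos one_pos]; linarith
      _ = 3/2 := by norm_num
  rw [show (L:ℝ) / 3 + (1 / 9) * (1 - (-1 / 2 : ℝ) ^ L) - L / 3 = (1/9) * (1 - (-1/2:ℝ)^L) by ring,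
    abs_mul]
  rw [show |(1/9 : ℝ)| = 1/9 by norm_num]
  linarith
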